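/- Let Ω ⊆ ℂ be open and let f : Ω → ℂ be holomorphic with f′(z) ≠ 0 for all z ∈ Ω. Let η(z) = log|f′(z)| (the log-density of the pulled-back Euclidean metric f*(|dz|)). Then for every z ∈ Ω, ∂∂η(z) − (∂η(z))² = (1/2)·S(f)(z), where S(f) = (f″/f′)′ − (1/2)·(f″/f′)² is the classical Schwarzian derivative of f. -/

import Mathlib

/-- The Wirtinger derivative `∂u(z) = (1/2)(u_x(z) − i·u_y(z))`, expressed via the real
Fréchet derivative of `u` evaluated at `1` and at `i`. -/
noncomputable def wirtD (u : ℂ → ℂ) (z : ℂ) : ℂ :=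
  (1 / 2) * (fderiv ℝ u z 1 - Complex.I * fderiv ℝ u z Complex.I)


theorem wirtD_congr {u v : ℂ → ℂ} {z : ℂ} (h : u =ᶠ[nhds z] v) :
    wirtD u z = wirtD v z := by
  unfold wirtD; rw [h.fderiv_eq]

theorem wirtD_holo {g : ℂ → ℂ} {z : ℂ} (hd : DifferentiableAt ℂ g z) :
    wirtD g z = deriv g z := by
  unfold wirtD
  have hf : fderiv ℝ g z = ContinuousLinearMap.restrictScalars ℝ
      (ContinuousLinearMap.smulRight (1 : ℂ →L[ℂ] ℂ) (deriv g z)) :=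
    (hd.hasDerivAt.hasFDerivAt.restrictScalars ℝ).fderiv
  rw [hf]
  simp only [ContinuousLinearMap.coe_restrictScalars', ContinuousLinearMap.smulRight_apply,
    ContinuousLinearMap.one_apply, smul_eq_mul, one_mul]
  have : Complex.I * Complex.I = -1 := Complex.I_mul_I
  ring_nf
  rw [Complex.I_sq]
  ring

theorem wirtD_logabs {h : ℂ → ℂ} {z : ℂ} (hd : DifferentiableAt ℂ h z) (h0 : h z ≠ 0) :
    wirtD (fun w => ((Real.log ‖h w‖ : ℝ) : ℂ)) z = deriv h z / h z / 2 := by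
  unfold wirtD
  have hne : ‖h z‖ ^ 2 ≠ 0 := by
    have := norm_ne_zero_iff.mpr h0
    positivity
  have F := (hd.hasDerivAt.hasFDerivAt).restrictScalars ℝ
  have hl := ((Real.hasDerivAt_log hne).comp_hasFDerivAt z F.norm_sq).const_smul (2⁻¹ : ℝ)
  have key : (fun w => ((Real.log ‖h w‖ : ℝ) : ℂ))
      = fun w => Complex.ofRealCLM ((2⁻¹ : ℝ) • (Real.log ∘ fun x => ‖h x‖ ^ 2) (w)) := by
    funext w
    simp [Real.log_pow]
  have hf : fderiv ℝ (fun w => Complex.ofRealCLM ((2⁻¹ : ℝ) • (Real.log ∘ fun x => ‖h x‖ ^ 2) (w))) z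
      = Complex.ofRealCLM.comp ((2⁻¹ : ℝ) • (‖h z‖ ^ 2)⁻¹ • 2 •
          ((innerSL ℝ) (h z)).comp
            (ContinuousLinearMap.restrictScalars ℝ (ContinuousLinearMap.smulRight 1 (deriv h z)))) :=
    (Complex.ofRealCLM.hasFDerivAt.comp z hl).fderiv
  rw [key, hf]
  simp only [ContinuousLinearMap.coe_comp', Function.comp_apply,
    ContinuousLinearMap.coe_smul', Pi.smul_apply, innerSL_apply_apply,
    ContinuousLinearMap.coe_restrictScalars', ContinuousLinearMap.smulRight_apply,
    ContinuousLinearMap.one_apply, Complex.inner, map_smul]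
  set a := h z
  set c := deriv h z
  simp only [smul_eq_mul, one_smul, Complex.ofReal_mul, Complex.ofReal_inv]
  rw [← Complex.normSq_eq_norm_sq]
  have hns : a.re ^ 2 + a.im ^ 2 ≠ 0 := by
    have := (Complex.normSq_pos.mpr h0).ne'
    simpa [Complex.normSq_apply, sq] using this
  have hns' : a.im ^ 2 + a.re ^ 2 ≠ 0 := by
    intro hc; exact hns (by linarith)
  apply Complex.ext <;>
    simp [Complex.div_re, Complex.div_im, Complex.normSq_apply, Complex.mul_re,
      Complex.mul_im] <;>
  · have hns2 : a.re * a.re + a.im * a.im ≠ 0 := by intro hc; exact hns (by linarith)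
    field_simp
    all_goals ring

/-- The identity `S(f) = 2·B(|dz|, f*(|dz|))` of the paper: if `f` is holomorphic with
nonvanishing derivative on an open set `Ω ⊆ ℂ` and `η = log|f′|` is the log-density of
the pulled-back Euclidean metric, then `∂∂η − (∂η)² = (1/2)·S(f)` on `Ω`, where
`S(f) = (f″/f′)′ − (1/2)(f″/f′)²` is the classical Schwarzian derivative. -/
theorem metric_schwarzian_eq_half_classical (Ω : Set ℂ) (hΩ : IsOpen Ω)
    (f : ℂ → ℂ) (hf : DifferentiableOn ℂ f Ω)
    (hf' : ∀ z ∈ Ω, deriv f z ≠ 0)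
    (η : ℂ → ℝ) (hη : ∀ z ∈ Ω, η z = Real.log ‖deriv f z‖) :
    ∀ z ∈ Ω,
      wirtD (wirtD fun w => (η w : ℂ)) z - (wirtD (fun w => (η w : ℂ)) z) ^ 2
        = (1 / 2) * (deriv (fun w => deriv (deriv f) w / deriv f w) z
            - (1 / 2) * (deriv (deriv f) z / deriv f z) ^ 2) := by

  intro z hz
  set g := deriv f with hg
  have hA : AnalyticOnNhd ℂ f Ω := hf.analyticOnNhd hΩ
  have hAg : AnalyticOnNhd ℂ g Ω := hA.deriv
  have hAg' : AnalyticOnNhd ℂ (deriv g) Ω := hAg.deriv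
  -- the function φ = (1/2) g'/g
  set φ : ℂ → ℂ := fun w => deriv g w / g w / 2 with hφ
  -- wirtD of η equals φ on Ω
  have hstep : ∀ w ∈ Ω, wirtD (fun w => ((η w : ℝ) : ℂ)) w = φ w := by
    intro w hw
    have hev : (fun w => ((η w : ℝ) : ℂ))
        =ᶠ[nhds w] fun w => ((Real.log ‖g w‖ : ℝ) : ℂ) := by
      filter_upwards [hΩ.mem_nhds hw] with x hx
      rw [hη x hx]
    rw [wirtD_congr hev, wirtD_logabs ((hAg w hw).differentiableAt) (hf' w hw)]
  -- wirtD η is eventually φ near z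
  have hev2 : wirtD (fun w => ((η w : ℝ) : ℂ)) =ᶠ[nhds z] φ := by
    filter_upwards [hΩ.mem_nhds hz] with x hx
    exact hstep x hx
  have hq : DifferentiableAt ℂ (fun w => deriv g w / g w) z :=
    ((hAg' z hz).differentiableAt).div ((hAg z hz).differentiableAt) (hf' z hz)
  have hφd : DifferentiableAt ℂ φ z := hq.div_const 2
  have houter : wirtD (wirtD fun w => ((η w : ℝ) : ℂ)) z = deriv φ z := by
    rw [wirtD_congr hev2, wirtD_holo hφd]
  have hderiv : deriv φ z = deriv (fun w => deriv g w / g w) z / 2 := by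
    simpa [hφ] using deriv_div_const (f := fun w => deriv g w / g w) (c := (2:ℂ)) (x := z)
  rw [houter, hderiv, hstep z hz, hφ]
  ring
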